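/- Let q(m) = √(1 − m²) on (−1,1). Then for y ∈ {−1,1}, the Bregman loss ℓ(y, m̂) = q(m̂) − q(y) − q'(m̂)(m̂ − y) equals exp(−(y/2)·log((1+m̂)/(1−m̂))) for all m̂ ∈ (−1,1); i.e., it is the AdaBoost exponential loss. -/

import Mathlib

/-- For `q(m) = √(1-m²)` and `y ∈ {-1,1}`, the Bregman loss equals the
AdaBoost exponential loss `exp(-(y/2) log((1+m̂)/(1-m̂)))` on `(-1,1)`. -/
theorem stmt19 (y : ℝ) (hy : y = -1 ∨ y = 1) :
    ∀ m : ℝ, -1 < m → m < 1 →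
      Real.sqrt (1 - m^2) - Real.sqrt (1 - y^2)
          - (-m / Real.sqrt (1 - m^2)) * (m - y)
        = Real.exp (-(y/2) * Real.log ((1 + m) / (1 - m))) := by
  intro m hm1 hm2
  have ha : (0:ℝ) < 1 + m := by linarith
  have hb : (0:ℝ) < 1 - m := by linarith
  have hmm : 1 - m^2 = (1-m)*(1+m) := by ring
  have hs : Real.sqrt (1-m^2) = Real.sqrt (1-m) * Real.sqrt (1+m) := by
    rw [hmm, Real.sqrt_mul hb.le]
  have hsa : Real.sqrt (1+m) ^ 2 = 1 + m := Real.sq_sqrt ha.le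
  have hsb : Real.sqrt (1-m) ^ 2 = 1 - m := Real.sq_sqrt hb.le
  have hpa : 0 < Real.sqrt (1+m) := Real.sqrt_pos.mpr ha
  have hpb : 0 < Real.sqrt (1-m) := Real.sqrt_pos.mpr hb
  have hdiv : (0:ℝ) < (1+m)/(1-m) := div_pos ha hb
  rcases hy with rfl | rfl
  · have hrhs : Real.exp (-((-1:ℝ)/2) * Real.log ((1 + m) / (1 - m)))
        = Real.sqrt (1+m) / Real.sqrt (1-m) := by
      rw [show -((-1:ℝ)/2) * Real.log ((1 + m) / (1 - m))
            = Real.log ((1 + m) / (1 - m)) * (1/2) by ring,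
        ← Real.rpow_def_of_pos hdiv, ← Real.sqrt_eq_rpow,
        Real.sqrt_div ha.le]
    rw [hrhs]
    have : Real.sqrt (1 - (-1:ℝ)^2) = 0 := by norm_num
    rw [this, hs]
    field_simp
    linear_combination (Real.sqrt (1+m)^2) * hsb + (-m) * hsa
  · have hrhs : Real.exp (-((1:ℝ)/2) * Real.log ((1 + m) / (1 - m)))
        = Real.sqrt (1-m) / Real.sqrt (1+m) := by
      rw [show -((1:ℝ)/2) * Real.log ((1 + m) / (1 - m))
            = Real.log ((1 - m) / (1 + m)) * (1/2) by
        rw [Real.log_div hb.ne' ha.ne', Real.log_div ha.ne' hb.ne']; ring,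
        ← Real.rpow_def_of_pos (div_pos hb ha), ← Real.sqrt_eq_rpow,
        Real.sqrt_div hb.le]
    rw [hrhs]
    have : Real.sqrt (1 - (1:ℝ)^2) = 0 := by norm_num
    rw [this, hs]
    field_simp
    linear_combination (Real.sqrt (1-m)^2) * hsa + m * hsb
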